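/- Let R be a Noetherian unique factorization domain with fraction field Q, and let M be a finitely generated torsion R-module. Regard Q/R (the quotient of Q by the image of R) as an R-module. Then Hom_R(M, Q/R) is pseudo-isomorphic to M: there exists an R-linear map from Hom_R(M, Q/R) to M with pseudo-null kernel and cokernel. -/

import Mathlib

/-- A module `M` over `R` is pseudo-null if its localization at every height-one
prime ideal of `R` vanishes. -/
def IsPseudoNull (R : Type*) [CommRing R] (M : Type*) [AddCommGroup M] [Module R M] : Prop :=
  ∀ P : PrimeSpectrum R, Order.height P = 1 →
    Subsingleton (LocalizedModule P.asIdeal.primeCompl M)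

/-- A linear map is a pseudo-isomorphism if its kernel and cokernel are pseudo-null. -/
def IsPseudoIsom (R : Type*) [CommRing R] {M N : Type*} [AddCommGroup M] [Module R M]
    [AddCommGroup N] [Module R N] (f : M →ₗ[R] N) : Prop :=
  IsPseudoNull R (LinearMap.ker f) ∧ IsPseudoNull R (N ⧸ LinearMap.range f)

open DirectSum

open Order

section Aux

variable {R : Type*} [CommRing R]

/-- If every element of `N` is killed by some element of `T`, the localization is trivial. -/
lemma subsingleton_localizedModule_of_torsion {N : Type*} [AddCommGroup N] [Module R N]
    (T : Submonoid R) (h : ∀ x : N, ∃ s ∈ T, s • x = 0) :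
    Subsingleton (LocalizedModule T N) := by
  suffices hz : ∀ z : LocalizedModule T N, z = 0 by
    exact ⟨fun a b => (hz a).trans (hz b).symm⟩
  intro z
  induction z using LocalizedModule.induction_on with
  | _ m s =>
    obtain ⟨u, hu, hum⟩ := h m
    rw [show (0 : LocalizedModule T N) = LocalizedModule.mk 0 s from
      (LocalizedModule.zero_mk s).symm, LocalizedModule.mk_eq]
    refine ⟨⟨u, hu⟩, ?_⟩
    simp only [Submonoid.smul_def, smul_zero]
    rw [smul_comm, hum, smul_zero]

variable [IsDomain R] [UniqueFactorizationMonoid R]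

/-- A prime ideal contained in the span of a prime element is either trivial or the span. -/
lemma prime_ideal_le_span_prime {π : R} (hπ : Prime π) {q : Ideal R} (hq : q.IsPrime)
    (hle : q ≤ Ideal.span {π}) : q = ⊥ ∨ q = Ideal.span {π} := by
  by_cases hπq : π ∈ q
  · exact Or.inr (le_antisymm hle ((Ideal.span_singleton_le_iff_mem q).mpr hπq))
  refine Or.inl (eq_bot_iff.mpr fun x =>
    wellFounded_dvdNotUnit.induction (C := fun x => x ∈ q → x ∈ (⊥ : Ideal R)) x
      fun x IH hx => ?_)
  · obtain ⟨y, rfl⟩ : π ∣ x := Ideal.mem_span_singleton.mp (hle hx)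
    have hy : y ∈ q := (hq.mem_or_mem hx).resolve_left hπq
    by_cases hy0 : y = 0
    · simp [hy0]
    have : y ∈ (⊥ : Ideal R) := IH y ⟨hy0, π, hπ.not_unit, mul_comm π y⟩ hy
    simp [Ideal.mem_bot.mp this]

/-- The span of a prime element has height one in the prime spectrum. -/
lemma height_span_prime {π : R} (hπ : Prime π) :
    Order.height (⟨Ideal.span {π}, (Ideal.span_singleton_prime hπ.ne_zero).mpr hπ⟩ :
      PrimeSpectrum R) = 1 := by
  set P0 : PrimeSpectrum R := ⟨Ideal.span {π}, (Ideal.span_singleton_prime hπ.ne_zero).mpr hπ⟩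
  have hbot : (⟨⊥, Ideal.bot_prime⟩ : PrimeSpectrum R) < P0 := by
    rw [← PrimeSpectrum.asIdeal_lt_asIdeal]
    refine Ne.bot_lt' fun h => ?_
    have : π ∈ (⊥ : Ideal R) := h ▸ Ideal.subset_span (Set.mem_singleton π)
    exact hπ.ne_zero (Ideal.mem_bot.mp this)
  have hle : Order.height P0 ≤ 1 := by
    have := (Order.height_le_coe_iff (x := P0) (n := 1))
    rw [Nat.cast_one] at this
    rw [this]
    intro y hy
    have hyle : y.asIdeal ≤ Ideal.span {π} := (PrimeSpectrum.asIdeal_le_asIdeal _ _).mpr hy.le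
    have hyne : y.asIdeal ≠ Ideal.span {π} := fun h => hy.ne (PrimeSpectrum.ext h)
    have hybot : y.asIdeal = ⊥ :=
      (prime_ideal_le_span_prime hπ y.isPrime hyle).resolve_right hyne
    have : IsMin y := by
      intro z hz
      have : z.asIdeal ≤ y.asIdeal := (PrimeSpectrum.asIdeal_le_asIdeal _ _).mpr hz
      rw [hybot, le_bot_iff] at this
      rw [← PrimeSpectrum.asIdeal_le_asIdeal, hybot, this]
    rw [Order.height_eq_zero.mpr this]
    exact zero_lt_one
  refine le_antisymm hle ?_
  rw [ENat.one_le_iff_ne_zero, ne_eq, Order.height_eq_zero]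
  exact fun h => (h hbot.le).not_gt hbot

/-- A height-one prime containing a prime element is its span. -/
lemma height_one_eq_span {π : R} (hπ : Prime π) {P : PrimeSpectrum R}
    (hP : Order.height P = 1) (hmem : π ∈ P.asIdeal) : P.asIdeal = Ideal.span {π} := by
  set P0 : PrimeSpectrum R := ⟨Ideal.span {π}, (Ideal.span_singleton_prime hπ.ne_zero).mpr hπ⟩
  have hle : P0 ≤ P := by
    rw [← PrimeSpectrum.asIdeal_le_asIdeal]
    exact (Ideal.span_singleton_le_iff_mem _).mpr hmem
  rcases eq_or_lt_of_le hle with h | h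
  · exact (congrArg PrimeSpectrum.asIdeal h).symm
  · exfalso
    have h1 : Order.height P0 = 1 := height_span_prime hπ
    have := Order.height_strictMono h (by rw [h1]; exact (ENat.coe_lt_top 1))
    rw [h1, hP] at this
    exact lt_irrefl _ this

/-- Any height-one prime containing `a ≠ 0` is the span of a prime factor of `a`. -/
lemma height_one_mem_classify {a : R} (ha : a ≠ 0) {P : PrimeSpectrum R}
    (hP : Order.height P = 1) (hmem : a ∈ P.asIdeal) :
    ∃ π : R, Prime π ∧ π ∣ a ∧ P.asIdeal = Ideal.span {π} := by
  obtain ⟨f, hf, hfa⟩ := UniqueFactorizationMonoid.exists_prime_factors a ha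
  have hprod : f.prod ∈ P.asIdeal := by
    obtain ⟨u, hu⟩ := hfa.symm
    exact hu ▸ Ideal.mul_mem_right _ _ hmem
  obtain ⟨π, hπf, hπP⟩ := (P.isPrime.multiset_prod_mem_iff_exists_mem f).mp hprod
  exact ⟨π, hf π hπf, (Multiset.dvd_prod hπf).trans hfa.dvd,
    height_one_eq_span (hf π hπf) hP hπP⟩

end Aux

section Cyclic

variable {A : Type*} [CommRing A] [IsDomain A] (K : Type*) [Field K] [Algebra A K]
  [IsFractionRing A K]

/-- Duality for cyclic torsion modules: `Hom(A/(b), K/A) ≃ A/(b)`. -/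
noncomputable def dualCyclicEquiv (b : A) (hb : b ≠ 0) :
    ((A ⧸ (A ∙ b)) →ₗ[A] (K ⧸ LinearMap.range (Algebra.linearMap A K))) ≃ₗ[A]
      (A ⧸ (A ∙ b)) := by
  have hinj : Function.Injective (algebraMap A K) := IsFractionRing.injective A K
  have hbK : algebraMap A K b ≠ 0 := fun h => hb (hinj (h.trans (map_zero _).symm))
  set X := K ⧸ LinearMap.range (Algebra.linearMap A K) with hX
  set ψ : A →ₗ[A] X :=
    (LinearMap.range (Algebra.linearMap A K)).mkQ.comp
      (LinearMap.toSpanSingleton A K (algebraMap A K b)⁻¹) with hψ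
  have ψ_apply : ∀ r : A, ψ r = Submodule.Quotient.mk (algebraMap A K r * (algebraMap A K b)⁻¹) :=
    fun r => by simp [hψ, LinearMap.toSpanSingleton_apply, Algebra.smul_def]
  have hψb : ψ b = 0 := by
    rw [ψ_apply, mul_inv_cancel₀ hbK]
    exact (Submodule.Quotient.mk_eq_zero _).mpr ⟨1, by simp⟩
  have hker : (A ∙ b) ≤ LinearMap.ker ψ :=
    (Submodule.span_singleton_le_iff_mem _ _).mpr (LinearMap.mem_ker.mpr hψb)
  set Φ : (A ⧸ (A ∙ b)) →ₗ[A] X := Submodule.liftQ _ ψ hker with hΦ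
  have Φ_apply : ∀ r : A, Φ (Submodule.Quotient.mk r) =
      Submodule.Quotient.mk (algebraMap A K r * (algebraMap A K b)⁻¹) := fun r => by
    rw [hΦ, Submodule.liftQ_apply, ψ_apply]
  set B : A →ₗ[A] ((A ⧸ (A ∙ b)) →ₗ[A] X) := LinearMap.toSpanSingleton A _ Φ with hB
  have B_apply : ∀ r y : A, B r (Submodule.Quotient.mk y) =
      Submodule.Quotient.mk (algebraMap A K (r * y) * (algebraMap A K b)⁻¹) := by
    intro r y
    rw [hB, LinearMap.toSpanSingleton_apply, LinearMap.smul_apply, Φ_apply,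
      ← Submodule.Quotient.mk_smul, Algebra.smul_def, map_mul]
    congr 1
    ring
  have hBb : B b = 0 := by
    refine Submodule.linearMap_qext _ (LinearMap.ext fun y => ?_)
    simp only [LinearMap.comp_apply, Submodule.mkQ_apply, LinearMap.zero_apply]
    rw [B_apply, mul_comm b y, map_mul, mul_assoc, mul_inv_cancel₀ hbK, mul_one]
    exact (Submodule.Quotient.mk_eq_zero _).mpr ⟨y, rfl⟩
  have hkerB : (A ∙ b) ≤ LinearMap.ker B :=
    (Submodule.span_singleton_le_iff_mem _ _).mpr (LinearMap.mem_ker.mpr hBb)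
  set Ψ : (A ⧸ (A ∙ b)) →ₗ[A] ((A ⧸ (A ∙ b)) →ₗ[A] X) := Submodule.liftQ _ B hkerB with hΨ
  have Ψ_apply : ∀ r y : A, Ψ (Submodule.Quotient.mk r) (Submodule.Quotient.mk y) =
      Submodule.Quotient.mk (algebraMap A K (r * y) * (algebraMap A K b)⁻¹) := fun r y => by
    rw [hΨ, Submodule.liftQ_apply, B_apply]
  have hinjΨ : Function.Injective Ψ := by
    rw [← LinearMap.ker_eq_bot, LinearMap.ker_eq_bot']
    intro x hx
    obtain ⟨r, rfl⟩ := Submodule.Quotient.mk_surjective _ x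
    have h1 : Ψ (Submodule.Quotient.mk r) (Submodule.Quotient.mk 1) = 0 := by rw [hx]; rfl
    rw [Ψ_apply, mul_one] at h1
    obtain ⟨c, hc⟩ := (Submodule.Quotient.mk_eq_zero _).mp h1
    have : algebraMap A K (c * b) = algebraMap A K r := by
      rw [map_mul]
      rw [show (Algebra.linearMap A K) c = algebraMap A K c from rfl] at hc
      rw [hc, mul_assoc, inv_mul_cancel₀ hbK, mul_one]
    have : r ∈ (A ∙ b) := by
      rw [← hinj this]
      exact Submodule.smul_mem _ c (Submodule.mem_span_singleton_self b)
    exact (Submodule.Quotient.mk_eq_zero _).mpr this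
  have hsurjΨ : Function.Surjective Ψ := by
    intro φ
    obtain ⟨ξ, hξ⟩ := Submodule.Quotient.mk_surjective _ (φ (Submodule.Quotient.mk 1))
    have hbx : Submodule.Quotient.mk (p := LinearMap.range (Algebra.linearMap A K))
        (algebraMap A K b * ξ) = 0 := by
      have : b • φ (Submodule.Quotient.mk 1) = 0 := by
        rw [← map_smul, ← Submodule.Quotient.mk_smul, smul_eq_mul, mul_one]
        have : (Submodule.Quotient.mk b : A ⧸ (A ∙ b)) = 0 :=
          (Submodule.Quotient.mk_eq_zero _).mpr (Submodule.mem_span_singleton_self b)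
        rw [this, map_zero]
      rw [← hξ, ← Submodule.Quotient.mk_smul, Algebra.smul_def] at this
      exact this
    obtain ⟨c, hc⟩ := (Submodule.Quotient.mk_eq_zero _).mp hbx
    have hξeq : ξ = algebraMap A K c * (algebraMap A K b)⁻¹ := by
      rw [show (Algebra.linearMap A K) c = algebraMap A K c from rfl] at hc
      rw [hc]
      field_simp
    refine ⟨Submodule.Quotient.mk c, ?_⟩
    refine Submodule.linearMap_qext _ (LinearMap.ext fun y => ?_)
    simp only [LinearMap.comp_apply, Submodule.mkQ_apply]
    rw [Ψ_apply]
    have : φ (Submodule.Quotient.mk y) = y • φ (Submodule.Quotient.mk 1) := by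
      rw [← map_smul, ← Submodule.Quotient.mk_smul, smul_eq_mul, mul_one]
    rw [this, ← hξ, ← Submodule.Quotient.mk_smul, Algebra.smul_def, hξeq, mul_comm c y, map_mul,
      mul_assoc]
  exact (LinearEquiv.ofBijective Ψ ⟨hinjΨ, hsurjΨ⟩).symm

end Cyclic

section LocQuot

variable {R : Type*} [CommRing R] [IsDomain R] (S : Submonoid R)
variable (K : Type*) [Field K] [Algebra R K] [IsFractionRing R K]
variable [Algebra (Localization S) K] [IsScalarTower R (Localization S) K]

/-- Localizing `K ⧸ R` at `S` gives `K ⧸ S⁻¹R`. -/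
noncomputable def localizedQuotEquiv :
    (LocalizedModule S (K ⧸ LinearMap.range (Algebra.linearMap R K))) ≃ₗ[Localization S]
      K ⧸ LinearMap.range (Algebra.linearMap (Localization S) K) := by
  set R' := Localization S
  set B' : Submodule R' K := LinearMap.range (Algebra.linearMap R' K) with hB'
  have hrange : LinearMap.range (Algebra.linearMap R K) ≤
      LinearMap.ker ((B'.mkQ).restrictScalars R) := by
    rintro x ⟨r, rfl⟩
    simp only [LinearMap.mem_ker, LinearMap.restrictScalars_apply, Submodule.mkQ_apply]
    rw [Submodule.Quotient.mk_eq_zero]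
    refine ⟨algebraMap R R' r, ?_⟩
    simp [Algebra.linearMap_apply, ← IsScalarTower.algebraMap_apply]
  set g0 : (K ⧸ LinearMap.range (Algebra.linearMap R K)) →ₗ[R] (K ⧸ B') :=
    Submodule.liftQ _ ((B'.mkQ).restrictScalars R) hrange with hg0
  have g0_apply : ∀ ξ : K, g0 (Submodule.Quotient.mk ξ) = Submodule.Quotient.mk ξ := fun ξ => rfl
  have husm : ∀ s : S, IsUnit ((algebraMap R (Module.End R (K ⧸ B'))) s) := by
    intro s
    rcases IsLocalization.map_units R' s with ⟨u, hu⟩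
    rw [Module.End.isUnit_iff]
    have hact : ∀ x : K ⧸ B', (algebraMap R (Module.End R (K ⧸ B'))) s x = u • x := by
      intro x
      rw [Module.algebraMap_end_apply, algebra_compatible_smul R' (s : R) x, ← hu, Units.smul_def]
    constructor
    · intro x y hxy
      rw [hact, hact] at hxy
      simpa using congrArg (fun z => (u⁻¹ : R'ˣ) • z) hxy
    · intro x
      exact ⟨(u⁻¹ : R'ˣ) • x, by rw [hact, smul_inv_smul]⟩
  set g1 : LocalizedModule S (K ⧸ LinearMap.range (Algebra.linearMap R K)) →ₗ[R] (K ⧸ B') :=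
    LocalizedModule.lift S g0 husm with hg1
  have g1_mk1 : ∀ q, g1 (LocalizedModule.mk q 1) = g0 q := by
    intro q
    have := LinearMap.congr_fun (LocalizedModule.lift_comp S g0 husm) q
    exact this
  have hspec : ∀ (r : R) (t : S), algebraMap R' K (IsLocalization.mk' R' r t) * algebraMap R K t
      = algebraMap R K r := by
    intro r t
    rw [IsScalarTower.algebraMap_apply R R' K, IsScalarTower.algebraMap_apply R R' K,
      ← map_mul, IsLocalization.mk'_spec]
  have hbij : Function.Bijective g1 := by
    constructor
    · rw [← LinearMap.ker_eq_bot, LinearMap.ker_eq_bot']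
      intro z hz
      induction z using LocalizedModule.induction_on with
      | _ m s =>
        have hg0m : g0 m = 0 := by
          have h1 : (LocalizedModule.mk m 1 :
              LocalizedModule S (K ⧸ LinearMap.range (Algebra.linearMap R K))) =
              (s : R) • LocalizedModule.mk m s := by
            rw [LocalizedModule.smul'_mk, ← Submonoid.smul_def, LocalizedModule.mk_cancel]
          rw [← g1_mk1, h1, map_smul, hz, smul_zero]
        obtain ⟨ξ, rfl⟩ := Submodule.Quotient.mk_surjective _ m
        rw [g0_apply, Submodule.Quotient.mk_eq_zero] at hg0m
        obtain ⟨y, hy⟩ := hg0m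
        obtain ⟨⟨r, t⟩, rfl⟩ := IsLocalization.mk'_surjective S y
        have htξ : (t : R) • ξ = algebraMap R K r := by
          rw [Algebra.smul_def, mul_comm, ← hspec r t]
          congr 1
          exact hy.symm
        have htm : (t : R) • (Submodule.Quotient.mk ξ :
            K ⧸ LinearMap.range (Algebra.linearMap R K)) = 0 := by
          rw [← Submodule.Quotient.mk_smul, htξ, Submodule.Quotient.mk_eq_zero]
          exact ⟨r, rfl⟩
        have : (0 : LocalizedModule S (K ⧸ LinearMap.range (Algebra.linearMap R K))) =
            LocalizedModule.mk 0 s := (LocalizedModule.zero_mk s).symm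
        rw [this, LocalizedModule.mk_eq]
        refine ⟨t, ?_⟩
        simp only [Submonoid.smul_def, smul_zero]
        rw [smul_comm, htm, smul_zero]
    · intro x
      obtain ⟨ξ, rfl⟩ := Submodule.Quotient.mk_surjective _ x
      exact ⟨LocalizedModule.mk (Submodule.Quotient.mk ξ) 1, by rw [g1_mk1, g0_apply]⟩
  exact LinearEquiv.ofBijective (g1.extendScalarsOfIsLocalization S R') hbij

end LocQuot

section HomFinite

variable {R : Type*} [CommRing R] [IsDomain R] [IsNoetherianRing R]
variable (K : Type*) [Field K] [Algebra R K] [IsFractionRing R K]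
variable {M : Type*} [AddCommGroup M] [Module R M] [Module.Finite R M]

/-- If `M` is finitely generated and killed by `a ≠ 0`, then `Hom(M, K/R)` is finitely
generated. -/
lemma hom_quot_finite {a : R} (ha : a ≠ 0) (haM : ∀ x : M, a • x = 0) :
    Module.Finite R (M →ₗ[R] (K ⧸ LinearMap.range (Algebra.linearMap R K))) := by
  classical
  set QR := K ⧸ LinearMap.range (Algebra.linearMap R K) with hQR
  set T : Submodule R QR := Submodule.torsionBy R QR a with hT
  have hinj : Function.Injective (algebraMap R K) := IsFractionRing.injective R K
  have haK : algebraMap R K a ≠ 0 := fun h => ha (hinj (h.trans (map_zero _).symm))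
  -- a surjection from R onto the `a`-torsion of K/R
  set ψ0 : R →ₗ[R] QR := (LinearMap.range (Algebra.linearMap R K)).mkQ.comp
    (LinearMap.toSpanSingleton R K (algebraMap R K a)⁻¹) with hψ0
  have ψ0_apply : ∀ r : R, ψ0 r = Submodule.Quotient.mk (algebraMap R K r * (algebraMap R K a)⁻¹) :=
    fun r => by simp [hψ0, LinearMap.toSpanSingleton_apply, Algebra.smul_def]
  have hψ0T : ∀ r : R, ψ0 r ∈ T := by
    intro r
    rw [hT, Submodule.mem_torsionBy_iff, ψ0_apply, ← Submodule.Quotient.mk_smul,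
      Algebra.smul_def, ← mul_assoc, ← map_mul, mul_comm a r, map_mul, mul_assoc,
      mul_inv_cancel₀ haK, mul_one, Submodule.Quotient.mk_eq_zero]
    exact ⟨r, rfl⟩
  set ψ : R →ₗ[R] T := LinearMap.codRestrict T ψ0 hψ0T with hψ
  have hψsurj : Function.Surjective ψ := by
    rintro ⟨x, hx⟩
    rw [Submodule.mem_torsionBy_iff] at hx
    obtain ⟨ξ, rfl⟩ := Submodule.Quotient.mk_surjective _ x
    rw [← Submodule.Quotient.mk_smul, Submodule.Quotient.mk_eq_zero] at hx
    obtain ⟨r, hr⟩ := hx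
    refine ⟨r, Subtype.ext ?_⟩
    have : ξ = algebraMap R K r * (algebraMap R K a)⁻¹ := by
      rw [show (Algebra.linearMap R K) r = algebraMap R K r from rfl] at hr
      rw [hr, Algebra.smul_def, mul_comm (algebraMap R K a) ξ, mul_assoc,
        mul_inv_cancel₀ haK, mul_one]
    simp only [hψ, LinearMap.codRestrict_apply, ψ0_apply, this]
  have hTfin : Module.Finite R T := Module.Finite.of_surjective ψ hψsurj
  have hTnoeth : IsNoetherian R T := isNoetherian_of_isNoetherianRing_of_finite R T
  obtain ⟨n, s, hs⟩ := Module.Finite.exists_fin (R := R) (M := M)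
  have hmem : ∀ (φ : M →ₗ[R] QR) (i : Fin n), φ (s i) ∈ T := by
    intro φ i
    rw [hT, Submodule.mem_torsionBy_iff, ← map_smul, haM, map_zero]
  set ι : (M →ₗ[R] QR) →ₗ[R] (Fin n → T) :=
    LinearMap.pi (fun i => LinearMap.codRestrict T
      ((LinearMap.applyₗ (s i)).comp (LinearMap.id)) (fun φ => hmem φ i)) with hι
  have hιinj : Function.Injective ι := by
    rw [← LinearMap.ker_eq_bot, LinearMap.ker_eq_bot']
    intro φ hφ
    have hgen : ∀ i, φ (s i) = 0 := by
      intro i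
      have h1 : (ι φ) i = 0 := congrFun hφ i
      have := congrArg Subtype.val h1
      simpa [hι] using this
    ext x
    have hx : x ∈ Submodule.span R (Set.range s) := hs ▸ Submodule.mem_top
    induction hx using Submodule.span_induction with
    | mem y hy => obtain ⟨i, rfl⟩ := hy; simp [hgen i]
    | zero => simp
    | add y z _ _ hy hz => simp [map_add, hy, hz]
    | smul c y _ hy => simp [map_smul, hy]
  exact Module.Finite.of_injective ι hιinj

end HomFinite

section SMonoid

variable {R : Type*} [CommRing R] [IsDomain R] [UniqueFactorizationMonoid R]

/-- The multiplicative set of elements avoiding all height-one primes containing `a`. -/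
def auxSubmonoid (a : R) : Submonoid R where
  carrier := {s | ∀ P : PrimeSpectrum R, Order.height P = 1 → a ∈ P.asIdeal → s ∉ P.asIdeal}
  one_mem' := fun P _ _ h1 => P.isPrime.ne_top (Ideal.eq_top_iff_one _ |>.mpr h1)
  mul_mem' := by
    intro s t hs ht P h1 h2 hmem
    rcases P.isPrime.mem_or_mem hmem with h | h
    · exact hs P h1 h2 h
    · exact ht P h1 h2 h

lemma mem_auxSubmonoid {a s : R} :
    s ∈ auxSubmonoid a ↔
      ∀ P : PrimeSpectrum R, Order.height P = 1 → a ∈ P.asIdeal → s ∉ P.asIdeal :=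
  Iff.rfl

lemma auxSubmonoid_le_nonZeroDivisors {a : R} (ha0 : a ≠ 0) (hanu : ¬IsUnit a) :
    auxSubmonoid a ≤ nonZeroDivisors R := by
  obtain ⟨f, hf, hfa⟩ := UniqueFactorizationMonoid.exists_prime_factors a ha0
  have hfne : f ≠ 0 := by
    rintro rfl
    rw [Multiset.prod_zero] at hfa
    exact hanu (associated_one_iff_isUnit.mp hfa.symm)
  obtain ⟨π, hπf⟩ := Multiset.exists_mem_of_ne_zero hfne
  have hπ : Prime π := hf π hπf
  set P : PrimeSpectrum R :=
    ⟨Ideal.span {π}, (Ideal.span_singleton_prime hπ.ne_zero).mpr hπ⟩ with hP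
  have hht : Order.height P = 1 := height_span_prime hπ
  have haP : a ∈ P.asIdeal :=
    Ideal.mem_span_singleton.mpr ((Multiset.dvd_prod hπf).trans hfa.dvd)
  intro s hs
  refine mem_nonZeroDivisors_of_ne_zero fun h0 => ?_
  exact hs P hht haP (h0 ▸ P.asIdeal.zero_mem)

lemma auxSubmonoid_pid {a : R} (ha0 : a ≠ 0) :
    IsPrincipalIdealRing (Localization (auxSubmonoid a)) := by
  classical
  set S := auxSubmonoid a with hS
  set R' := Localization S with hR'
  obtain ⟨f, hf, hfa⟩ := UniqueFactorizationMonoid.exists_prime_factors a ha0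
  refine IsPrincipalIdealRing.of_prime fun Q' hQ' => ?_
  have hcomap := (IsLocalization.isPrime_iff_isPrime_disjoint S R' Q').mp hQ'
  set p := Ideal.comap (algebraMap R R') Q' with hp
  by_cases hpbot : p = ⊥
  · have : Q' = ⊥ := by
      rw [← IsLocalization.map_comap S R' Q', Ideal.under_def, ← hp, hpbot, Ideal.map_bot]
    rw [this]
    infer_instance
  · -- p is contained in the union of the spans of the prime factors of a
    have hsub : (p : Set R) ⊆ ⋃ π ∈ (f.toFinset : Finset R), (Ideal.span {π} : Set R) := by
      intro x hx
      have hxS : x ∉ S := fun hxS =>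
        Set.disjoint_left.mp hcomap.2 hxS hx
      rw [hS, mem_auxSubmonoid] at hxS
      push_neg at hxS
      obtain ⟨P, hP1, haP, hxP⟩ := hxS
      obtain ⟨π0, hπ0, hπ0a, hPeq⟩ := height_one_mem_classify ha0 hP1 haP
      have hπ0f : π0 ∣ f.prod := hπ0a.trans hfa.symm.dvd
      obtain ⟨π, hπf, hπ0π⟩ := hπ0.exists_mem_multiset_dvd hπ0f
      have hassoc : Associated π0 π := hπ0.associated_of_dvd (hf π hπf) hπ0π
      have : Ideal.span {π0} = Ideal.span ({π} : Set R) :=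
        Ideal.span_singleton_eq_span_singleton.mpr hassoc
      refine Set.mem_biUnion (Multiset.mem_toFinset.mpr hπf) ?_
      rw [← this, ← hPeq]
      exact hxP
    have hprime : ∀ π ∈ f.toFinset, π ≠ (0 : R) → π ≠ (0 : R) →
        (Ideal.span ({π} : Set R)).IsPrime := fun π hπf _ _ =>
      (Ideal.span_singleton_prime (hf π (Multiset.mem_toFinset.mp hπf)).ne_zero).mpr
        (hf π (Multiset.mem_toFinset.mp hπf))
    have := (Ideal.subset_union_prime (R := R) (s := f.toFinset)
      (f := fun π => Ideal.span {π}) 0 0 (fun i hi hia hib => hprime i hi ?_ ?_)).mp hsub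
    rotate_left
    · intro h; exact hia h
    · intro h; exact hib h
    obtain ⟨π, hπf, hple⟩ := this
    have hπ : Prime π := hf π (Multiset.mem_toFinset.mp hπf)
    have hpeq : p = Ideal.span {π} :=
      (prime_ideal_le_span_prime hπ hcomap.1 hple).resolve_left hpbot
    have : Q' = Ideal.span {algebraMap R R' π} := by
      rw [← IsLocalization.map_comap S R' Q', Ideal.under_def, ← hp, hpeq, Ideal.map_span,
        Set.image_singleton]
    rw [this]
    exact ⟨⟨algebraMap R R' π, rfl⟩⟩

end SMonoid

universe u v

/-- Duality for finitely generated torsion modules over a PID: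
`Hom(N, K/A)` is (non-canonically) isomorphic to `N`. -/
lemma dual_equiv_of_pid (A : Type u) [CommRing A] [IsDomain A] [IsPrincipalIdealRing A]
    (K : Type*) [Field K] [Algebra A K] [IsFractionRing A K]
    (N : Type max u v) [AddCommGroup N] [Module A N] [Module.Finite A N]
    (hN : Module.IsTorsion A N) :
    Nonempty ((N →ₗ[A] (K ⧸ LinearMap.range (Algebra.linearMap A K))) ≃ₗ[A] N) := by
  classical
  obtain ⟨ι, hfin, p, hp, e, ⟨g⟩⟩ := Module.equiv_directSum_of_isTorsion hN
  letI := hfin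
  set X := K ⧸ LinearMap.range (Algebra.linearMap A K)
  have hpne : ∀ i, p i ^ e i ≠ 0 := fun i =>
    pow_ne_zero _ (UniqueFactorizationMonoid.irreducible_iff_prime.mp (hp i)).ne_zero
  have E1 : (N →ₗ[A] X) ≃ₗ[A] ((⨁ i : ι, A ⧸ A ∙ p i ^ e i) →ₗ[A] X) :=
    LinearEquiv.arrowCongr g (LinearEquiv.refl A X)
  have E2 : ((⨁ i : ι, A ⧸ A ∙ p i ^ e i) →ₗ[A] X) ≃ₗ[A]
      (((i : ι) → A ⧸ A ∙ p i ^ e i) →ₗ[A] X) :=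
    LinearEquiv.arrowCongr
      (DirectSum.linearEquivFunOnFintype A ι (fun i => A ⧸ A ∙ p i ^ e i))
      (LinearEquiv.refl A X)
  have E3 : (((i : ι) → A ⧸ A ∙ p i ^ e i) →ₗ[A] X) ≃ₗ[A]
      ((i : ι) → ((A ⧸ A ∙ p i ^ e i) →ₗ[A] X)) :=
    (LinearMap.lsum A (fun i => A ⧸ A ∙ p i ^ e i) A).symm
  have E4 : ((i : ι) → ((A ⧸ A ∙ p i ^ e i) →ₗ[A] X)) ≃ₗ[A]
      ((i : ι) → A ⧸ A ∙ p i ^ e i) :=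
    LinearEquiv.piCongrRight (fun i => dualCyclicEquiv K (p i ^ e i) (hpne i))
  have E5 : ((i : ι) → A ⧸ A ∙ p i ^ e i) ≃ₗ[A] (⨁ i : ι, A ⧸ A ∙ p i ^ e i) :=
    (DirectSum.linearEquivFunOnFintype A ι (fun i => A ⧸ A ∙ p i ^ e i)).symm
  exact ⟨E1.trans (E2.trans (E3.trans (E4.trans (E5.trans g.symm))))⟩

lemma isPseudoNull_of_subsingleton (R : Type*) [CommRing R] (M : Type*) [AddCommGroup M]
    [Module R M] [h : Subsingleton M] : IsPseudoNull R M := fun P _ =>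
  subsingleton_localizedModule_of_torsion _ fun x =>
    ⟨1, Submonoid.one_mem _, by rw [Subsingleton.elim x 0, smul_zero]⟩

set_option maxHeartbeats 1000000 in
/-- Over a Noetherian UFD `R` with fraction field `Q`, a finitely generated torsion module
`M` is pseudo-isomorphic to `Hom_R(M, Q/R)`. -/
theorem stmt_6 (R : Type*) [CommRing R] [IsDomain R] [IsNoetherianRing R]
    [UniqueFactorizationMonoid R]
    (M : Type*) [AddCommGroup M] [Module R M] [Module.Finite R M]
    (hM : Module.IsTorsion R M) :
    ∃ f : (M →ₗ[R] (FractionRing R ⧸ LinearMap.range (Algebra.linearMap R (FractionRing R))))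
        →ₗ[R] M, IsPseudoIsom R f := by
  classical
  -- Step 1: a nonzero annihilator `a` of `M`
  obtain ⟨n, gens, hgens⟩ := Module.Finite.exists_fin (R := R) (M := M)
  have key : ∃ a : R, a ≠ 0 ∧ ∀ x : M, a • x = 0 := by
    choose c hc using fun i => @hM (gens i)
    refine ⟨∏ i, (c i : R), ?_, ?_⟩
    · exact Finset.prod_ne_zero_iff.mpr fun i _ =>
        nonZeroDivisors.ne_zero (c i).2
    · intro x
      have hx : x ∈ Submodule.span R (Set.range gens) := hgens ▸ Submodule.mem_top
      induction hx using Submodule.span_induction with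
      | mem y hy =>
        obtain ⟨i, rfl⟩ := hy
        rw [← Finset.prod_erase_mul Finset.univ _ (Finset.mem_univ i), mul_smul]
        rw [show (c i : R) • gens i = 0 from hc i, smul_zero]
      | zero => simp
      | add y z _ _ hy hz => rw [smul_add, hy, hz, add_zero]
      | smul r y _ hy => rw [smul_comm, hy, smul_zero]
  obtain ⟨a, ha0, haM⟩ := key
  by_cases hau : IsUnit a
  · -- trivial case : `M = 0`
    have hx0 : ∀ x : M, x = 0 := by
      obtain ⟨u, rfl⟩ := hau
      intro x
      have h1 : (u : R) • x = 0 := haM x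
      calc x = u⁻¹ • (u • x) := (inv_smul_smul u x).symm
        _ = u⁻¹ • ((u : R) • x) := by rw [Units.smul_def u x]
        _ = 0 := by rw [h1, smul_zero]
    have hMsub : Subsingleton M := ⟨fun x y => (hx0 x).trans (hx0 y).symm⟩
    have hHsub : Subsingleton (M →ₗ[R]
        (FractionRing R ⧸ LinearMap.range (Algebra.linearMap R (FractionRing R)))) :=
      ⟨fun φ ψ => LinearMap.ext fun x => by rw [hx0 x, map_zero, map_zero]⟩
    haveI := hMsub
    haveI := hHsub
    haveI hcok : Subsingleton (M ⧸ LinearMap.range (0 : (M →ₗ[R]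
        (FractionRing R ⧸ LinearMap.range (Algebra.linearMap R (FractionRing R)))) →ₗ[R] M)) := by
      refine ⟨fun x y => ?_⟩
      obtain ⟨mx, rfl⟩ := Submodule.Quotient.mk_surjective _ x
      obtain ⟨my, rfl⟩ := Submodule.Quotient.mk_surjective _ y
      rw [hx0 mx, hx0 my]
    exact ⟨0, isPseudoNull_of_subsingleton R _, isPseudoNull_of_subsingleton R _⟩
  · -- main case
    set Q := FractionRing R with hQdef
    set S := auxSubmonoid a with hSdef
    have hS0 : S ≤ nonZeroDivisors R := auxSubmonoid_le_nonZeroDivisors ha0 hau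
    set R' := Localization S with hR'def
    haveI : IsDomain R' := IsLocalization.isDomain_localization hS0
    haveI : IsPrincipalIdealRing R' := auxSubmonoid_pid ha0
    letI : Algebra R' Q := IsLocalization.localizationAlgebraOfSubmonoidLe R' Q S
      (nonZeroDivisors R) hS0
    haveI : IsScalarTower R R' Q :=
      IsLocalization.localization_isScalarTower_of_submonoid_le R' Q S (nonZeroDivisors R) hS0
    haveI : IsFractionRing R' Q :=
      IsFractionRing.isFractionRing_of_isDomain_of_isLocalization S R' Q
    set M' := LocalizedModule S M with hM'def
    haveI : Module.Finite R' M' :=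
      Module.Finite.of_isLocalizedModule S (LocalizedModule.mkLinearMap S M)
    have hainj : Function.Injective (algebraMap R R') := IsLocalization.injective R' hS0
    have haR' : algebraMap R R' a ≠ 0 := fun h => ha0 (hainj (h.trans (map_zero _).symm))
    have hM'tors : Module.IsTorsion R' M' := by
      intro x
      refine ⟨⟨algebraMap R R' a, mem_nonZeroDivisors_of_ne_zero haR'⟩, ?_⟩
      have : (algebraMap R R' a) • x = a • x := (algebra_compatible_smul R' a x).symm
      rw [Submonoid.smul_def, this]
      induction x using LocalizedModule.induction_on with
      | _ m s => rw [LocalizedModule.smul'_mk, haM m, LocalizedModule.zero_mk]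
    obtain ⟨e⟩ := dual_equiv_of_pid R' Q M' hM'tors
    set QR := Q ⧸ LinearMap.range (Algebra.linearMap R Q) with hQRdef
    let eQ : LocalizedModule S QR ≃ₗ[R'] (Q ⧸ LinearMap.range (Algebra.linearMap R' Q)) :=
      localizedQuotEquiv S Q
    haveI : Module.FinitePresentation R M := Module.finitePresentation_of_finite R M
    set map0 : (M →ₗ[R] QR) →ₗ[R] (M' →ₗ[R'] LocalizedModule S QR) :=
      LocalizedModule.map S (M := M) (N := QR) with hmap0
    let E : (M' →ₗ[R'] LocalizedModule S QR) ≃ₗ[R'] M' :=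
      (LinearEquiv.arrowCongr (LinearEquiv.refl R' M') eQ).trans e
    set ℓ : (M →ₗ[R] QR) →ₗ[R] M' := (E.restrictScalars R).toLinearMap ∘ₗ map0 with hℓdef
    haveI hIL : IsLocalizedModule S ℓ := by
      rw [hℓdef]
      exact IsLocalizedModule.of_linearEquiv S map0 (E.restrictScalars R)
    haveI : Module.Finite R (M →ₗ[R] QR) := hom_quot_finite Q ha0 haM
    haveI : Module.FinitePresentation R (M →ₗ[R] QR) :=
      Module.finitePresentation_of_finite _ _
    obtain ⟨F, t, hF⟩ := Module.FinitePresentation.exists_lift_of_isLocalizedModule S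
      (LocalizedModule.mkLinearMap S M) ℓ
    -- `t` acting on `M'` is invertible
    have htunit : ∀ z : M', (t : R) • z = 0 → z = 0 := by
      intro z hz
      rcases IsLocalization.map_units R' t with ⟨u, hu⟩
      have h1 : u • z = 0 := by
        rw [Units.smul_def, hu, ← algebra_compatible_smul R' (t : R) z, hz]
      have h2 := congrArg (fun w => (u⁻¹ : R'ˣ) • w) h1
      simpa using h2
    have hannH : ∀ (φ : M →ₗ[R] QR), a • φ = 0 := by
      intro φ
      ext m
      rw [LinearMap.smul_apply, ← map_smul, haM, map_zero, LinearMap.zero_apply]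
    refine ⟨F, ?_, ?_⟩
    · -- kernel is pseudo-null
      intro P hP
      by_cases haP : a ∈ P.asIdeal
      · apply subsingleton_localizedModule_of_torsion
        rintro ⟨φ, hφ⟩
        rw [LinearMap.mem_ker] at hφ
        have h1 : (t : R) • ℓ φ = 0 := by
          have h2 := LinearMap.congr_fun hF φ
          rw [LinearMap.comp_apply, hφ, map_zero, LinearMap.smul_apply,
            Submonoid.smul_def] at h2
          exact h2.symm
        have h2 : ℓ φ = 0 := htunit _ h1
        obtain ⟨s, hs⟩ := (IsLocalizedModule.eq_zero_iff S ℓ).mp h2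
        rw [Submonoid.smul_def] at hs
        refine ⟨(s : R), s.2 P hP haP, Subtype.ext ?_⟩
        rw [SetLike.val_smul]
        exact hs
      · apply subsingleton_localizedModule_of_torsion
        rintro ⟨φ, hφ⟩
        refine ⟨a, haP, Subtype.ext ?_⟩
        rw [SetLike.val_smul]
        exact hannH φ
    · -- cokernel is pseudo-null
      intro P hP
      by_cases haP : a ∈ P.asIdeal
      · apply subsingleton_localizedModule_of_torsion
        intro y
        obtain ⟨m, rfl⟩ := Submodule.Quotient.mk_surjective _ y
        obtain ⟨⟨h, u⟩, hu⟩ := IsLocalizedModule.surj S ℓ (LocalizedModule.mkLinearMap S M m)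
        have h1 : LocalizedModule.mkLinearMap S M (F h) =
            LocalizedModule.mkLinearMap S M (((t : R) * (u : R)) • m) := by
          have h2 := LinearMap.congr_fun hF h
          simp only [LinearMap.comp_apply, LinearMap.smul_apply] at h2
          rw [h2, ← hu, Submonoid.smul_def, Submonoid.smul_def, mul_smul, map_smul, map_smul]
        obtain ⟨v, hv⟩ := IsLocalizedModule.exists_of_eq
          (S := S) (f := LocalizedModule.mkLinearMap S M) h1
        refine ⟨((v : R) * ((t : R) * (u : R))), (v * (t * u)).2 P hP haP, ?_⟩
        rw [← Submodule.Quotient.mk_smul, Submodule.Quotient.mk_eq_zero]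
        refine ⟨(v : R) • h, ?_⟩
        rw [map_smul]
        simp only [Submonoid.smul_def] at hv
        rw [hv, ← mul_smul]
      · apply subsingleton_localizedModule_of_torsion
        intro y
        obtain ⟨m, rfl⟩ := Submodule.Quotient.mk_surjective _ y
        refine ⟨a, haP, ?_⟩
        rw [← Submodule.Quotient.mk_smul, haM, Submodule.Quotient.mk_zero]
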